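/- The Goryachev Hamiltonian H₂ = J₁² + J₂² + (4/3)J₃² + c·x₁/x₃^{2/3} + d/x₃^{2/3} Poisson-commutes with its cubic integral K₂ given by formula (K) with α = 1/3, n(x₃) = c·x₃^{1/3}, g = d/n², ℓ = n n″/n′, f as in (fgml), on the set where x₃ > 0, x₁²+x₂²+x₃² = a², and x₁J₁+x₂J₂+x₃J₃ = 0. -/

import Mathlib

open scoped BigOperators

/-- Index of `x_i` (i = 0,1,2) in phase space `ℝ⁶ = Fin 6 → ℝ`. -/
def xIdx (i : Fin 3) : Fin 6 := ⟨i.1, by omega⟩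
/-- Index of `J_i` (i = 0,1,2) in phase space. -/
def jIdx (i : Fin 3) : Fin 6 := ⟨i.1 + 3, by omega⟩

/-- Partial derivative of `F` in the `i`-th coordinate direction. -/
noncomputable def pd (i : Fin 6) (F : (Fin 6 → ℝ) → ℝ) (z : Fin 6 → ℝ) : ℝ :=
  fderiv ℝ F z (Pi.single i 1)

/-- Levi-Civita symbol on `Fin 3`. -/
def eps (i j k : Fin 3) : ℝ :=
  if (i,j,k) = (0,1,2) ∨ (i,j,k) = (1,2,0) ∨ (i,j,k) = (2,0,1) then 1
  else if (i,j,k) = (1,0,2) ∨ (i,j,k) = (2,1,0) ∨ (i,j,k) = (0,2,1) then -1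
  else 0

/-- The e(3) Poisson bracket on smooth functions of `(x, J) ∈ ℝ⁶`, generated by
`{J_i,J_j} = ε_{ijk} J_k`, `{J_i,x_j} = ε_{ijk} x_k`, `{x_i,x_j} = 0`. -/
noncomputable def e3Bracket (F G : (Fin 6 → ℝ) → ℝ) (z : Fin 6 → ℝ) : ℝ :=
  ∑ i : Fin 3, ∑ j : Fin 3, ∑ k : Fin 3, eps i j k *
    ( z (jIdx k) * pd (jIdx i) F z * pd (jIdx j) G z
    + z (xIdx k) * pd (jIdx i) F z * pd (xIdx j) G z
    + z (xIdx k) * pd (xIdx i) F z * pd (jIdx j) G z )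

lemma pd_eq {F : (Fin 6 → ℝ) → ℝ} {L : (Fin 6 → ℝ) →L[ℝ] ℝ} {z : Fin 6 → ℝ}
    (h : HasFDerivAt F L z) (i : Fin 6) : pd i F z = L (Pi.single i 1) := by
  rw [pd, h.fderiv]

lemma pd_congr {F G : (Fin 6 → ℝ) → ℝ} {z : Fin 6 → ℝ}
    (h : F =ᶠ[nhds z] G) (i : Fin 6) : pd i F z = pd i G z := by
  rw [pd, pd, h.fderiv_eq]

lemma upow2 (t : ℝ) (ht : 0 ≤ t) : t ^ (-(2:ℝ)/3) = ((t ^ ((1:ℝ)/3)) ^ 2)⁻¹ := by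
  rw [← Real.rpow_natCast (t ^ ((1:ℝ)/3)) 2, ← Real.rpow_mul ht, ← Real.rpow_neg ht]
  congr 1; norm_num

lemma upow5 (t : ℝ) (ht : 0 ≤ t) : t ^ (-(2:ℝ)/3 - 1) = ((t ^ ((1:ℝ)/3)) ^ 5)⁻¹ := by
  rw [← Real.rpow_natCast (t ^ ((1:ℝ)/3)) 5, ← Real.rpow_mul ht, ← Real.rpow_neg ht]
  congr 1; norm_num

lemma cube_rpow (t : ℝ) (ht : 0 ≤ t) : (t ^ ((1:ℝ)/3)) ^ 3 = t := by
  rw [← Real.rpow_natCast (t ^ ((1:ℝ)/3)) 3, ← Real.rpow_mul ht]; norm_num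

set_option maxHeartbeats 1600000 in
/-- The Goryachev system: with `α = 1/3`, `n(x₃) = c x₃^{1/3}`, `g = d/n²`,
`m = −n′/α`, `ℓ = nn″/n′` and `f` given by (fgml), the Hamiltonian
`H₂ = J₁²+J₂²+(4/3)J₃² + m x₁ + g` (which is
`J₁²+J₂²+(4/3)J₃² + c x₁/x₃^{2/3} + d/x₃^{2/3}` after the rescaling
`c → −c`, `d → d/c²`) Poisson-commutes with the cubic integral `K₂` of formula (K)
on the set `x₃ > 0`, `x₁²+x₂²+x₃² = a²`, `x·J = 0`. -/
theorem goryachev_system_commute (a c d : ℝ) (hc : c ≠ 0) (α : ℝ) (hα : α = 1/3)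
    (n m ℓ g f : ℝ → ℝ)
    (hn : n = fun t => c * t ^ ((1:ℝ)/3))
    (hg : g = fun t => d / (n t)^2)
    (hm : m = fun t => -(deriv n t) / α)
    (hℓ : ℓ = fun t => n t * (deriv (deriv n) t) / deriv n t)
    (hf : f = fun t => 1 - 3*α^2
        - α * (3*t*(m t) - 2*(a^2 - t^2)*(deriv m t)) / n t
        + (t*(ℓ t) - (a^2 - t^2)*(deriv ℓ t)) / n t)
    (H K : (Fin 6 → ℝ) → ℝ)
    (hH : H = fun z => (z (jIdx 0))^2 + (z (jIdx 1))^2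
        + (4/3) * (z (jIdx 2))^2
        + m (z (xIdx 2)) * z (xIdx 0) + g (z (xIdx 2)))
    (hK : K = fun z => -2*α*(z (jIdx 2)) *
          (-(α^2)*(z (jIdx 2))^2 + (z (jIdx 0))^2 + (z (jIdx 1))^2
            + f (z (xIdx 2)) * (z (jIdx 2))^2 + g (z (xIdx 2)))
        - n (z (xIdx 2)) * z (jIdx 0)
        - ℓ (z (xIdx 2)) * z (xIdx 0) * z (jIdx 2)) :
    ∀ z : Fin 6 → ℝ, 0 < z (xIdx 2) →
      (z (xIdx 0))^2 + (z (xIdx 1))^2 + (z (xIdx 2))^2 = a^2 →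
      z (xIdx 0) * z (jIdx 0) + z (xIdx 1) * z (jIdx 1) + z (xIdx 2) * z (jIdx 2) = 0 →
      e3Bracket H K z = 0 := by
  -- scalar function facts
  have hdn : ∀ t : ℝ, t ≠ 0 → deriv n t = c * (((1:ℝ)/3) * t ^ (-(2:ℝ)/3)) := by
    intro t ht
    rw [hn]
    have := ((Real.hasDerivAt_rpow_const (p := (1:ℝ)/3) (Or.inl ht)).const_mul c).deriv
    rw [this, show (1:ℝ)/3 - 1 = -(2:ℝ)/3 by norm_num]
  have hmv : ∀ t : ℝ, t ≠ 0 → m t = -c * t ^ (-(2:ℝ)/3) := by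
    intro t ht
    rw [hm]; simp only; rw [hdn t ht, hα]; ring
  have hgv : ∀ t : ℝ, 0 < t → g t = d / c^2 * t ^ (-(2:ℝ)/3) := by
    intro t ht
    have hu : (0:ℝ) < t ^ ((1:ℝ)/3) := Real.rpow_pos_of_pos ht _
    rw [hg]; simp only; rw [hn]; simp only
    rw [upow2 t ht.le, mul_pow]
    field_simp
  have hdm : ∀ t : ℝ, 0 < t → deriv m t = (-c * (-(2:ℝ)/3)) * t ^ (-(2:ℝ)/3 - 1) := by
    intro t ht
    have hev : m =ᶠ[nhds t] fun x => -c * x ^ (-(2:ℝ)/3) := by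
      filter_upwards [eventually_gt_nhds ht] with x hx
      exact hmv x hx.ne'
    rw [hev.deriv_eq]
    have := ((Real.hasDerivAt_rpow_const (p := -(2:ℝ)/3) (Or.inl ht.ne')).const_mul (-c)).deriv
    rw [this]; ring
  have hddn : ∀ t : ℝ, 0 < t → deriv (deriv n) t
      = (c * ((1:ℝ)/3) * (-(2:ℝ)/3)) * t ^ (-(2:ℝ)/3 - 1) := by
    intro t ht
    have hev : deriv n =ᶠ[nhds t] fun x => (c * ((1:ℝ)/3)) * x ^ (-(2:ℝ)/3) := by
      filter_upwards [eventually_gt_nhds ht] with x hx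
      rw [hdn x hx.ne']; ring
    rw [hev.deriv_eq]
    have := ((Real.hasDerivAt_rpow_const (p := -(2:ℝ)/3) (Or.inl ht.ne')).const_mul
      (c * ((1:ℝ)/3))).deriv
    rw [this]; ring
  have hℓv : ∀ t : ℝ, 0 < t → ℓ t = (-2*c/3) * t ^ (-(2:ℝ)/3) := by
    intro t ht
    rw [hℓ]; simp only
    rw [hdn t ht.ne', hddn t ht, hn]; simp only
    rw [upow2 t ht.le, upow5 t ht.le]
    set u := t ^ ((1:ℝ)/3) with hu_def
    have hu : (0:ℝ) < u := Real.rpow_pos_of_pos ht _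
    field_simp
  have hdℓ : ∀ t : ℝ, 0 < t → deriv ℓ t = ((-2*c/3) * (-(2:ℝ)/3)) * t ^ (-(2:ℝ)/3 - 1) := by
    intro t ht
    have hev : ℓ =ᶠ[nhds t] fun x => (-2*c/3) * x ^ (-(2:ℝ)/3) := by
      filter_upwards [eventually_gt_nhds ht] with x hx
      exact hℓv x hx
    rw [hev.deriv_eq]
    have := ((Real.hasDerivAt_rpow_const (p := -(2:ℝ)/3) (Or.inl ht.ne')).const_mul
      (-2*c/3)).deriv
    rw [this]; ring
  have hfv : ∀ t : ℝ, 0 < t → f t = 1 := by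
    intro t ht
    rw [hf]; simp only
    rw [hmv t ht.ne', hdm t ht, hℓv t ht, hdℓ t ht, hn, hα]; simp only
    rw [upow2 t ht.le, upow5 t ht.le]
    set u := t ^ ((1:ℝ)/3) with hu_def
    have hu : (0:ℝ) < u := Real.rpow_pos_of_pos ht _
    have h3 : u ^ 3 = t := cube_rpow t ht.le
    rw [← h3]
    field_simp
    ring
  intro z hz3 hA hB
  -- eventual equality with explicit representatives
  have hopen : {y : Fin 6 → ℝ | 0 < y (xIdx 2)} ∈ nhds z :=
    (isOpen_lt continuous_const (continuous_apply _)).mem_nhds hz3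
  have hHev : H =ᶠ[nhds z] fun y => y (jIdx 0) * y (jIdx 0) + y (jIdx 1) * y (jIdx 1)
      + (4/3) * (y (jIdx 2) * y (jIdx 2))
      + (-c * (y (xIdx 2)) ^ (-(2:ℝ)/3)) * y (xIdx 0)
      + (d/c^2) * (y (xIdx 2)) ^ (-(2:ℝ)/3) := by
    filter_upwards [hopen] with y hy
    simp only [hH]
    rw [hmv _ hy.ne', hgv _ hy]
    ring
  have hKev : K =ᶠ[nhds z] fun y => ((-2:ℝ)/3 * y (jIdx 2)) *
        ( y (jIdx 0) * y (jIdx 0) + y (jIdx 1) * y (jIdx 1)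
          + (8/9) * (y (jIdx 2) * y (jIdx 2)) + (d/c^2) * (y (xIdx 2)) ^ (-(2:ℝ)/3) )
      - (c * (y (xIdx 2)) ^ ((1:ℝ)/3)) * y (jIdx 0)
      - ((-2*c/3) * (y (xIdx 2)) ^ (-(2:ℝ)/3)) * y (xIdx 0) * y (jIdx 2) := by
    filter_upwards [hopen] with y hy
    simp only [hK]
    rw [hfv _ hy, hℓv _ hy, hgv _ hy, hn, hα]
    simp only
    ring
  -- fderiv machinery
  have hp : ∀ i : Fin 6, HasFDerivAt (fun y : Fin 6 → ℝ => y i)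
      (ContinuousLinearMap.proj (R := ℝ) (φ := fun _ : Fin 6 => ℝ) i) z :=
    fun i => hasFDerivAt_apply i z
  have R2 := (Real.hasDerivAt_rpow_const (p := -(2:ℝ)/3)
    (Or.inl hz3.ne')).comp_hasFDerivAt z (hp (xIdx 2))
  have R1 := (Real.hasDerivAt_rpow_const (p := (1:ℝ)/3)
    (Or.inl hz3.ne')).comp_hasFDerivAt z (hp (xIdx 2))
  have hH' := (((((hp (jIdx 0)).mul (hp (jIdx 0))).add ((hp (jIdx 1)).mul (hp (jIdx 1)))).add
      (((hp (jIdx 2)).mul (hp (jIdx 2))).const_mul ((4:ℝ)/3))).add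
      ((R2.const_mul (-c)).mul (hp (xIdx 0)))).add (R2.const_mul (d/c^2))
  have hK' := ((((hp (jIdx 2)).const_mul ((-2:ℝ)/3)).mul
      (((((hp (jIdx 0)).mul (hp (jIdx 0))).add ((hp (jIdx 1)).mul (hp (jIdx 1)))).add
        (((hp (jIdx 2)).mul (hp (jIdx 2))).const_mul ((8:ℝ)/9))).add
        (R2.const_mul (d/c^2)))).sub
      ((R1.const_mul c).mul (hp (jIdx 0)))).sub
      (((R2.const_mul (-2*c/3)).mul (hp (xIdx 0))).mul (hp (jIdx 2)))
  -- partial derivatives of H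
  have pH0 : pd (jIdx 0) H z = 2 * z (jIdx 0) := by
    refine Eq.trans (pd_congr hHev _) (Eq.trans (pd_eq hH' _) ?_)
    simp [Pi.single_apply, jIdx, xIdx]; ring
  have pH1 : pd (jIdx 1) H z = 2 * z (jIdx 1) := by
    refine Eq.trans (pd_congr hHev _) (Eq.trans (pd_eq hH' _) ?_)
    simp [Pi.single_apply, jIdx, xIdx]; ring
  have pH2 : pd (jIdx 2) H z = 8/3 * z (jIdx 2) := by
    refine Eq.trans (pd_congr hHev _) (Eq.trans (pd_eq hH' _) ?_)
    simp [Pi.single_apply, jIdx, xIdx]; ring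
  have pHx0 : pd (xIdx 0) H z = -c * (z (xIdx 2)) ^ (-(2:ℝ)/3) := by
    refine Eq.trans (pd_congr hHev _) (Eq.trans (pd_eq hH' _) ?_)
    simp [Pi.single_apply, jIdx, xIdx]
  have pHx1 : pd (xIdx 1) H z = 0 := by
    refine Eq.trans (pd_congr hHev _) (Eq.trans (pd_eq hH' _) ?_)
    simp [Pi.single_apply, jIdx, xIdx]
  have pHx2 : pd (xIdx 2) H z
      = (-c * z (xIdx 0) + d/c^2) * (-(2:ℝ)/3 * (z (xIdx 2)) ^ (-(2:ℝ)/3 - 1)) := by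
    refine Eq.trans (pd_congr hHev _) (Eq.trans (pd_eq hH' _) ?_)
    simp [Pi.single_apply, jIdx, xIdx]; ring
  -- partial derivatives of K
  have pK0 : pd (jIdx 0) K z = -4/3 * z (jIdx 2) * z (jIdx 0)
      - c * (z (xIdx 2)) ^ ((1:ℝ)/3) := by
    refine Eq.trans (pd_congr hKev _) (Eq.trans (pd_eq hK' _) ?_)
    simp [Pi.single_apply, jIdx, xIdx]; ring
  have pK1 : pd (jIdx 1) K z = -4/3 * z (jIdx 2) * z (jIdx 1) := by
    refine Eq.trans (pd_congr hKev _) (Eq.trans (pd_eq hK' _) ?_)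
    simp [Pi.single_apply, jIdx, xIdx]; ring
  have pK2 : pd (jIdx 2) K z = -2/3 * (z (jIdx 0) * z (jIdx 0) + z (jIdx 1) * z (jIdx 1))
      - 16/9 * (z (jIdx 2) * z (jIdx 2)) - 2/3 * (d/c^2) * (z (xIdx 2)) ^ (-(2:ℝ)/3)
      + 2*c/3 * (z (xIdx 2)) ^ (-(2:ℝ)/3) * z (xIdx 0) := by
    refine Eq.trans (pd_congr hKev _) (Eq.trans (pd_eq hK' _) ?_)
    simp [Pi.single_apply, jIdx, xIdx]; ring
  have pKx0 : pd (xIdx 0) K z = 2*c/3 * (z (xIdx 2)) ^ (-(2:ℝ)/3) * z (jIdx 2) := by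
    refine Eq.trans (pd_congr hKev _) (Eq.trans (pd_eq hK' _) ?_)
    simp [Pi.single_apply, jIdx, xIdx]; ring
  have pKx1 : pd (xIdx 1) K z = 0 := by
    refine Eq.trans (pd_congr hKev _) (Eq.trans (pd_eq hK' _) ?_)
    simp [Pi.single_apply, jIdx, xIdx]
  have pKx2 : pd (xIdx 2) K z
      = -2/3 * z (jIdx 2) * (d/c^2) * (-(2:ℝ)/3 * (z (xIdx 2)) ^ (-(2:ℝ)/3 - 1))
      - c * ((1:ℝ)/3 * (z (xIdx 2)) ^ (-(2:ℝ)/3)) * z (jIdx 0)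
      + 2*c/3 * (-(2:ℝ)/3 * (z (xIdx 2)) ^ (-(2:ℝ)/3 - 1)) * z (xIdx 0) * z (jIdx 2) := by
    refine Eq.trans (pd_congr hKev _) (Eq.trans (pd_eq hK' _) ?_)
    simp [Pi.single_apply, jIdx, xIdx]
    ring
  -- expand the bracket
  rw [e3Bracket]
  simp (config := { decide := true }) only [Fin.sum_univ_three, eps, Prod.mk.injEq,
    if_true, if_false, ite_true, ite_false]
  norm_num
  rw [pH0, pH1, pH2, pHx0, pHx1, pHx2, pK0, pK1, pK2, pKx0, pKx1, pKx2]
  rw [upow2 (z (xIdx 2)) hz3.le, upow5 (z (xIdx 2)) hz3.le]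
  have h3 : (z (xIdx 2) ^ ((1:ℝ)/3)) ^ 3 = z (xIdx 2) := cube_rpow _ hz3.le
  set u := z (xIdx 2) ^ ((1:ℝ)/3) with hu_def
  have hu0 : (0:ℝ) < u := Real.rpow_pos_of_pos hz3 _
  rw [← h3] at hB ⊢
  have hune : u ≠ 0 := hu0.ne'
  linear_combination (norm := (field_simp; ring)) (-2*c/3) * z (jIdx 1) * (u^2)⁻¹ * hB
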